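/- Let W, W̃ ∈ ℂ^{n×n}. (1) If W̃ is a complex c-approximation of W for some finite c > 0, then every vector v with Wv = v satisfies W̃v = v; if moreover c < 1, then Wv = v holds if and only if W̃v = v. (2) If W̃ is a unit-circle c-approximation of W for some finite c > 0, then for every λ ∈ ℂ with |λ| = 1, every vector v with Wv = λv satisfies W̃v = λv; if moreover c < 1, then Wv = λv holds if and only if W̃v = λv. -/

import Mathlib

open Matrix

noncomputable section

/-- The sesquilinear form `x* A y`. -/
def sesq {m : Type*} [Fintype m] (A : Matrix m m ℂ) (x y : m → ℂ) : ℂ :=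
  star x ⬝ᵥ (A *ᵥ y)

/-- The squared Euclidean norm of a complex vector. -/
def vnormSq {m : Type*} [Fintype m] (x : m → ℂ) : ℝ :=
  ∑ i, Complex.normSq (x i)

/-- `W̃` is a *complex ε-approximation* of `W`. -/
def ComplexApprox {m : Type*} [Fintype m] (ε : ℝ) (W Wt : Matrix m m ℂ) : Prop :=
  ∀ x y : m → ℂ,
    ‖sesq (W - Wt) x y‖ ≤
      ε / 2 * (vnormSq x + vnormSq y - (sesq W x x + sesq W y y).re)

/-- `W̃` is a *unit-circle ε-approximation* of `W`. -/
def UnitCircleApprox {m : Type*} [Fintype m] (ε : ℝ) (W Wt : Matrix m m ℂ) : Prop :=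
  ∀ x y : m → ℂ,
    ‖sesq (W - Wt) x y‖ ≤
      ε / 2 * (vnormSq x + vnormSq y - ‖sesq W x x + sesq W y y‖)

section Helpers

variable {m : Type*} [Fintype m]

lemma sesq_smul_left (A : Matrix m m ℂ) (t : ℝ) (u y : m → ℂ) :
    sesq A ((t:ℂ) • u) y = (t:ℂ) * sesq A u y := by
  simp [sesq, star_smul, smul_dotProduct, smul_eq_mul]

lemma sesq_smul_right (A : Matrix m m ℂ) (t : ℝ) (x y : m → ℂ) :
    sesq A x ((t:ℂ) • y) = (t:ℂ) * sesq A x y := by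
  simp [sesq, mulVec_smul, dotProduct_smul, smul_eq_mul]

lemma vnormSq_smul (t : ℝ) (u : m → ℂ) :
    vnormSq ((t:ℂ) • u) = t^2 * vnormSq u := by
  simp [vnormSq, Complex.normSq_mul, Finset.mul_sum, Complex.normSq_ofReal, sq]

lemma sesq_sub (A B : Matrix m m ℂ) (x y : m → ℂ) :
    sesq (A - B) x y = sesq A x y - sesq B x y := by
  simp [sesq, sub_mulVec, dotProduct_sub]

lemma dot_self_eq (v : m → ℂ) : star v ⬝ᵥ v = (vnormSq v : ℂ) := by
  simp only [dotProduct, vnormSq, Pi.star_apply, Complex.ofReal_sum]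
  refine Finset.sum_congr rfl fun i _ => ?_
  rw [mul_comm, RCLike.star_def, Complex.mul_conj]

lemma vnormSq_nonneg (v : m → ℂ) : 0 ≤ vnormSq v :=
  Finset.sum_nonneg fun i _ => Complex.normSq_nonneg _

lemma vec_eq_zero (w : m → ℂ) (h : star w ⬝ᵥ w = 0) : w = 0 := by
  rw [dot_self_eq] at h
  have h' : vnormSq w = 0 := by exact_mod_cast h
  funext i
  have := (Finset.sum_eq_zero_iff_of_nonneg
    (fun j _ => Complex.normSq_nonneg (w j))).mp h' i (Finset.mem_univ i)
  simpa [Complex.normSq_eq_zero] using this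

lemma small_aux (z : ℂ) (K : ℝ)
    (h : ∀ t : ℝ, 0 < t → t * ‖z‖ ≤ t^2 * K) : z = 0 := by
  by_contra hz
  have hz' : 0 < ‖z‖ := by simpa [norm_pos_iff] using hz
  rcases le_or_gt K 0 with hK | hK
  · have := h 1 one_pos
    nlinarith
  · have := h (‖z‖ / (2*K)) (by positivity)
    have h2K : (0:ℝ) < 2*K := by linarith
    rw [div_pow, div_mul_eq_mul_div, div_mul_eq_mul_div,
      div_le_div_iff₀ (by positivity) (by positivity)] at this
    have ha2 : 0 < ‖z‖ ^ 2 * K ^ 2 := by positivity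
    nlinarith [ha2]

lemma mulVec_eq_of_sesq (A B : Matrix m m ℂ) (v : m → ℂ)
    (h : ∀ u, sesq (A - B) u v = 0) : A *ᵥ v = B *ᵥ v := by
  have h0 : (A - B) *ᵥ v = 0 := vec_eq_zero _ (h ((A - B) *ᵥ v))
  rwa [sub_mulVec, sub_eq_zero] at h0

lemma complex_key (W Wt : Matrix m m ℂ) (c : ℝ)
    (h : ComplexApprox c W Wt) (v : m → ℂ)
    (hv : (sesq W v v).re = vnormSq v) : W *ᵥ v = Wt *ᵥ v := by
  apply mulVec_eq_of_sesq
  intro u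
  apply small_aux _ (c / 2 * (vnormSq u - (sesq W u u).re))
  intro t ht
  have H := h ((t:ℂ) • u) v
  rw [sesq_smul_left, norm_mul, Complex.norm_real, Real.norm_eq_abs, abs_of_pos ht, vnormSq_smul,
    sesq_smul_left, sesq_smul_right] at H
  have hre : ((t:ℂ) * ((t:ℂ) * sesq W u u) + sesq W v v).re
      = t^2 * (sesq W u u).re + vnormSq v := by
    rw [Complex.add_re, hv]
    congr 1
    have e : (t:ℂ) * ((t:ℂ) * sesq W u u) = ((t^2 : ℝ):ℂ) * sesq W u u := by
      push_cast; ring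
    rw [e, Complex.re_ofReal_mul]
  rw [hre] at H
  calc t * ‖sesq (W - Wt) u v‖ ≤ _ := H
    _ = t^2 * (c/2 * (vnormSq u - (sesq W u u).re)) := by ring

lemma uc_key (W Wt : Matrix m m ℂ) (c : ℝ) (hc : 0 < c)
    (h : UnitCircleApprox c W Wt) (v : m → ℂ)
    (hv : ‖sesq W v v‖ = vnormSq v) : W *ᵥ v = Wt *ᵥ v := by
  apply mulVec_eq_of_sesq
  intro u
  apply small_aux _ (c / 2 * (vnormSq u + ‖sesq W u u‖))
  intro t ht
  have H := h ((t:ℂ) • u) v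
  rw [sesq_smul_left, norm_mul, Complex.norm_real, Real.norm_eq_abs, abs_of_pos ht, vnormSq_smul,
    sesq_smul_left, sesq_smul_right] at H
  set s := sesq W u u with hs
  set X := (t:ℂ) * ((t:ℂ) * s) + sesq W v v with hX
  have habsX : ‖(t:ℂ) * ((t:ℂ) * s)‖ = t^2 * ‖s‖ := by
    rw [norm_mul, norm_mul, Complex.norm_real, Real.norm_eq_abs, abs_of_pos ht]; ring
  have hsub : vnormSq v - ‖X‖ ≤ t^2 * ‖s‖ := by
    have h1 : ‖sesq W v v‖ - ‖X‖
        ≤ ‖sesq W v v - X‖ := by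
      simpa using norm_sub_norm_le (sesq W v v) X
    have h2 : sesq W v v - X = -((t:ℂ) * ((t:ℂ) * s)) := by rw [hX]; ring
    rw [h2, norm_neg, habsX, hv] at h1
    linarith
  have H2 : t * ‖sesq (W - Wt) u v‖
      ≤ c/2 * (t^2 * vnormSq u + t^2 * ‖s‖) := by
    have hmono : t^2 * vnormSq u + vnormSq v - ‖X‖
        ≤ t^2 * vnormSq u + t^2 * ‖s‖ := by linarith
    have := mul_le_mul_of_nonneg_left hmono (by linarith : (0:ℝ) ≤ c/2)
    linarith
  calc t * ‖sesq (W - Wt) u v‖ ≤ _ := H2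
    _ = t^2 * (c/2 * (vnormSq u + ‖s‖)) := by ring

end Helpers

/-- (1) If `W̃ ≈_c W` (complex approximation) for finite `c > 0`,
then every `v` with `Wv = v` satisfies `W̃v = v`; if moreover `c < 1` then
`Wv = v ↔ W̃v = v`.  (2) If `W̃ ∘≈_c W` (unit-circle approximation) for finite
`c > 0`, then for every `λ` with `|λ| = 1`, every `v` with `Wv = λv` satisfies
`W̃v = λv`; if moreover `c < 1` then `Wv = λv ↔ W̃v = λv`. -/
theorem eigenspace_preservation {n : ℕ} (W Wt : Matrix (Fin n) (Fin n) ℂ)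
    (c : ℝ) (hc : 0 < c) :
    (ComplexApprox c W Wt →
      (∀ v : Fin n → ℂ, W *ᵥ v = v → Wt *ᵥ v = v) ∧
      (c < 1 → ∀ v : Fin n → ℂ, W *ᵥ v = v ↔ Wt *ᵥ v = v)) ∧
    (UnitCircleApprox c W Wt →
      ∀ μ : ℂ, ‖μ‖ = 1 →
        (∀ v : Fin n → ℂ, W *ᵥ v = μ • v → Wt *ᵥ v = μ • v) ∧
        (c < 1 → ∀ v : Fin n → ℂ, W *ᵥ v = μ • v ↔ Wt *ᵥ v = μ • v)) := by
  constructor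
  · intro h
    have fwd : ∀ v : Fin n → ℂ, W *ᵥ v = v → Wt *ᵥ v = v := by
      intro v hWv
      have hsv : sesq W v v = (vnormSq v : ℂ) := by rw [sesq, hWv, dot_self_eq]
      have hkey := complex_key W Wt c h v (by rw [hsv, Complex.ofReal_re])
      rw [← hkey, hWv]
    refine ⟨fwd, fun hc1 v => ⟨fwd v, fun h2 => ?_⟩⟩
    have hWtv : sesq Wt v v = (vnormSq v : ℂ) := by rw [sesq, h2, dot_self_eq]
    have H := h v v
    rw [sesq_sub, hWtv] at H
    set z := sesq W v v - (vnormSq v : ℂ) with hzdef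
    have hreneg : vnormSq v - (sesq W v v).re = (-z).re := by
      simp [hzdef]
    have hle2 : (-z).re ≤ ‖z‖ := by
      calc (-z).re ≤ ‖-z‖ := Complex.re_le_norm _
        _ = ‖z‖ := by rw [norm_neg]
    have hzle : ‖z‖ ≤ c * (-z).re := by
      calc ‖z‖
          ≤ c/2 * (vnormSq v + vnormSq v - (sesq W v v + sesq W v v).re) := H
        _ = c * (vnormSq v - (sesq W v v).re) := by rw [Complex.add_re]; ring
        _ = c * (-z).re := by rw [hreneg]
    have habs0 : ‖z‖ = 0 := by
      nlinarith [norm_nonneg z, mul_le_mul_of_nonneg_left hle2 hc.le]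
    have hz0 : z = 0 := norm_eq_zero.mp habs0
    have hsv : sesq W v v = (vnormSq v : ℂ) := sub_eq_zero.mp hz0
    have hkey := complex_key W Wt c h v (by rw [hsv, Complex.ofReal_re])
    rw [hkey, h2]
  · intro h μ hμ
    have fwd : ∀ v : Fin n → ℂ, W *ᵥ v = μ • v → Wt *ᵥ v = μ • v := by
      intro v hWv
      have hsv : sesq W v v = μ * (vnormSq v : ℂ) := by
        rw [sesq, hWv, dotProduct_smul, dot_self_eq, smul_eq_mul]
      have habs : ‖sesq W v v‖ = vnormSq v := by
        rw [hsv, norm_mul, hμ, Complex.norm_real, Real.norm_eq_abs, one_mul,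
          abs_of_nonneg (vnormSq_nonneg v)]
      have hkey := uc_key W Wt c hc h v habs
      rw [← hkey, hWv]
    refine ⟨fwd, fun hc1 v => ⟨fwd v, fun h2 => ?_⟩⟩
    have hWtv : sesq Wt v v = μ * (vnormSq v : ℂ) := by
      rw [sesq, h2, dotProduct_smul, dot_self_eq, smul_eq_mul]
    have H := h v v
    rw [sesq_sub, hWtv] at H
    set s := sesq W v v with hsdef
    set z := s - μ * (vnormSq v : ℂ) with hzdef
    have hmul : (starRingEnd ℂ) μ * μ = 1 := by
      rw [mul_comm, Complex.mul_conj]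
      have h1 : Complex.normSq μ = 1 := by
        rw [← Complex.sq_norm, hμ]; norm_num
      rw [h1]; norm_num
    have hkey0 : vnormSq v - ‖s‖ ≤ ‖z‖ := by
      have h1 : ((starRingEnd ℂ) μ * s).re ≤ ‖s‖ := by
        calc ((starRingEnd ℂ) μ * s).re
            ≤ ‖(starRingEnd ℂ) μ * s‖ := Complex.re_le_norm _
          _ = ‖s‖ := by rw [norm_mul, Complex.norm_conj, hμ, one_mul]
      have h2' : ((starRingEnd ℂ) μ * (-z)).re ≤ ‖z‖ := by
        calc ((starRingEnd ℂ) μ * (-z)).re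
            ≤ ‖(starRingEnd ℂ) μ * (-z)‖ := Complex.re_le_norm _
          _ = ‖z‖ := by
              rw [norm_mul, norm_neg, Complex.norm_conj, hμ, one_mul]
      have h3 : ((starRingEnd ℂ) μ * (-z)).re
          = vnormSq v - ((starRingEnd ℂ) μ * s).re := by
        have e : (starRingEnd ℂ) μ * (-z)
            = ((vnormSq v : ℝ):ℂ) - (starRingEnd ℂ) μ * s := by
          calc (starRingEnd ℂ) μ * (-z)
              = ((starRingEnd ℂ) μ * μ) * ((vnormSq v : ℝ):ℂ)
                - (starRingEnd ℂ) μ * s := by rw [hzdef]; ring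
            _ = _ := by rw [hmul, one_mul]
        rw [e, Complex.sub_re, Complex.ofReal_re]
      linarith
    have hzle : ‖z‖ ≤ c * (vnormSq v - ‖s‖) := by
      calc ‖z‖
          ≤ c/2 * (vnormSq v + vnormSq v - ‖s + s‖) := H
        _ = c * (vnormSq v - ‖s‖) := by
            rw [show s + s = 2*s by ring, norm_mul, Complex.norm_two]; ring
    have habs0 : ‖z‖ = 0 := by
      nlinarith [norm_nonneg z, mul_le_mul_of_nonneg_left hkey0 hc.le]
    have hz0 : z = 0 := norm_eq_zero.mp habs0
    have hs : s = μ * (vnormSq v : ℂ) := sub_eq_zero.mp hz0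
    have habs : ‖sesq W v v‖ = vnormSq v := by
      rw [← hsdef, hs, norm_mul, hμ, Complex.norm_real, Real.norm_eq_abs, one_mul,
        abs_of_nonneg (vnormSq_nonneg v)]
    have hkey := uc_key W Wt c hc h v habs
    rw [hkey, h2]

end
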